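/- arXiv:1905.02032 — 2 statements merged into one kernel-verified Lean document; each statement's English description precedes it below -/
import Mathlib

section
/- If a and b are a pair of exact zero divisors in a commutative ring R, then the natural biduality map R/(a) → Hom_R(Hom_R(R/(a), R), R) is an isomorphism. -/
/-- If `a, b` are a pair of exact zero divisors in `R`, then the natural
biduality map `R/(a) → Hom_R(Hom_R(R/(a), R), R)` is an isomorphism. -/
theorem stmt2 (R : Type*) [CommRing R] (a b : R)
    (hab : ∀ x : R, a * x = 0 ↔ x ∈ Ideal.span {b})
    (hba : ∀ x : R, b * x = 0 ↔ x ∈ Ideal.span {a}) :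
    Function.Bijective (Module.Dual.eval R (R ⧸ Ideal.span {a})) := by
  have hab0 : a * b = 0 := (hab b).mpr (Ideal.mem_span_singleton_self b)
  set I := Ideal.span {a} with hI
  have hker : I ≤ LinearMap.ker (LinearMap.toSpanSingleton R R b) := by
    intro x hx
    obtain ⟨r, rfl⟩ := Ideal.mem_span_singleton'.mp hx
    simp only [LinearMap.mem_ker, LinearMap.toSpanSingleton_apply, smul_eq_mul]
    calc r * a * b = r * (a * b) := by ring
    _ = 0 := by rw [hab0, mul_zero]
  set ψ : (R ⧸ I) →ₗ[R] R :=
    Submodule.liftQ I (LinearMap.toSpanSingleton R R b) hker with hψ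
  have hψ_apply : ∀ x : R, ψ (Ideal.Quotient.mk I x) = x * b := by
    intro x
    show Submodule.liftQ I (LinearMap.toSpanSingleton R R b) hker
      (Submodule.Quotient.mk x) = x * b
    rw [Submodule.liftQ_apply, LinearMap.toSpanSingleton_apply, smul_eq_mul]
  have hmk_smul : ∀ x : R,
      (Ideal.Quotient.mk I x) = x • (Ideal.Quotient.mk I 1) := by
    intro x
    show Submodule.Quotient.mk x = x • (Submodule.Quotient.mk 1 : R ⧸ I)
    rw [← Submodule.Quotient.mk_smul, smul_eq_mul, mul_one]
  have hval : ∀ (φ : Module.Dual R (R ⧸ I)) (x : R),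
      φ (Ideal.Quotient.mk I x) = x * φ (Ideal.Quotient.mk I 1) := by
    intro φ x
    rw [hmk_smul x, map_smul, smul_eq_mul]
  have hφψ : ∀ φ : Module.Dual R (R ⧸ I), ∃ e : R, φ = e • ψ := by
    intro φ
    have ha1 : a * φ (Ideal.Quotient.mk I 1) = 0 := by
      rw [← hval φ a]
      have : (Ideal.Quotient.mk I a) = 0 :=
        Ideal.Quotient.eq_zero_iff_mem.mpr (Ideal.mem_span_singleton_self a)
      rw [this, map_zero]
    obtain ⟨e, he⟩ := Ideal.mem_span_singleton'.mp
      ((hab (φ (Ideal.Quotient.mk I 1))).mp ha1)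
    refine ⟨e, LinearMap.ext fun q => ?_⟩
    obtain ⟨x, rfl⟩ := Ideal.Quotient.mk_surjective q
    rw [hval φ x, LinearMap.smul_apply, hψ_apply, smul_eq_mul, ← he]
    ring
  constructor
  · rw [injective_iff_map_eq_zero]
    intro q hq
    obtain ⟨x, rfl⟩ := Ideal.Quotient.mk_surjective q
    have h1 : x * b = 0 := by
      have := congrArg (fun F => F ψ) hq
      simpa [Module.Dual.eval, hψ_apply] using this
    rw [Ideal.Quotient.eq_zero_iff_mem]
    exact (hba x).mp (by rw [mul_comm]; exact h1)
  · intro F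
    set s := F ψ with hs
    have haψ : a • ψ = 0 := by
      apply LinearMap.ext
      intro q
      obtain ⟨x, rfl⟩ := Ideal.Quotient.mk_surjective q
      rw [LinearMap.smul_apply, hψ_apply, smul_eq_mul, LinearMap.zero_apply]
      calc a * (x * b) = x * (a * b) := by ring
      _ = 0 := by rw [hab0, mul_zero]
    have has : a * s = 0 := by
      rw [hs, ← smul_eq_mul, ← map_smul, haψ, map_zero]
    obtain ⟨c, hc⟩ := Ideal.mem_span_singleton'.mp ((hab s).mp has)
    refine ⟨Ideal.Quotient.mk I c, LinearMap.ext fun φ => ?_⟩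
    obtain ⟨e, rfl⟩ := hφψ φ
    show (e • ψ) (Ideal.Quotient.mk I c) = F (e • ψ)
    rw [map_smul, LinearMap.smul_apply, hψ_apply, ← hs, smul_eq_mul, ← hc, smul_eq_mul]
end

section
/- Let R be a commutative ring and 𝔞, 𝔟 ideals with 𝔞·𝔟 = (0), 𝔞 ∩ 𝔟 = (0), and 𝔪 = 𝔞 + 𝔟. Suppose u ∈ 𝔞, v ∈ 𝔟, and there exist nonzero elements u' ∈ 𝔞, v' ∈ 𝔟 with u·u' = 0, v·v' = 0, and 𝔪·u' = 𝔪·v' = 0. If R is local with maximal ideal 𝔪 and every element of ann_R(u+v) lies in 𝔪, then ann_R(u+v) is not a principal ideal. -/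
/-- Let `R` be local with maximal ideal `𝔪 = 𝔞 + 𝔟`, where `𝔞𝔟 = 0` and
`𝔞 ∩ 𝔟 = 0`. Suppose `u ∈ 𝔞`, `v ∈ 𝔟`, and there are nonzero `u' ∈ 𝔞`,
`v' ∈ 𝔟` with `u·u' = 0`, `v·v' = 0` and `𝔪·u' = 𝔪·v' = 0`. If every
element of `ann(u+v)` lies in `𝔪`, then `ann(u+v)` is not principal. -/
theorem stmt13 (R : Type*) [CommRing R] [IsLocalRing R] (a b : Ideal R)
    (hab : a * b = ⊥) (hint : a ⊓ b = ⊥)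
    (hm : IsLocalRing.maximalIdeal R = a ⊔ b)
    (u v u' v' : R) (hu : u ∈ a) (hv : v ∈ b) (hu' : u' ∈ a) (hv' : v' ∈ b)
    (hu'0 : u' ≠ 0) (hv'0 : v' ≠ 0) (huu' : u * u' = 0) (hvv' : v * v' = 0)
    (hsocu : ∀ m ∈ IsLocalRing.maximalIdeal R, m * u' = 0)
    (hsocv : ∀ m ∈ IsLocalRing.maximalIdeal R, m * v' = 0)
    (hann : ∀ x : R, x * (u + v) = 0 → x ∈ IsLocalRing.maximalIdeal R) :
    ¬ ∃ w : R, ∀ x : R, x * (u + v) = 0 ↔ x ∈ Ideal.span {w} := by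
  rintro ⟨w, hw⟩
  -- products of elements of a and b vanish
  have hmul0 : ∀ p ∈ a, ∀ q ∈ b, p * q = 0 := by
    intro p hp q hq
    have : p * q ∈ a * b := Ideal.mul_mem_mul hp hq
    rwa [hab, Ideal.mem_bot] at this
  have hinf0 : ∀ z : R, z ∈ a → z ∈ b → z = 0 := by
    intro z hza hzb
    have : z ∈ a ⊓ b := ⟨hza, hzb⟩
    rwa [hint, Ideal.mem_bot] at this
  -- w annihilates u+v
  have hw0 : w * (u + v) = 0 := (hw w).2 (Ideal.mem_span_singleton_self w)
  -- u' and v' are in the annihilator, hence multiples of w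
  have hu'ann : u' * (u + v) = 0 := by
    rw [mul_add, mul_comm u' u, huu', hmul0 u' hu' v hv, add_zero]
  have hv'ann : v' * (u + v) = 0 := by
    have h := hmul0 u hu v' hv'
    linear_combination h + hvv'
  obtain ⟨r, hr⟩ := Ideal.mem_span_singleton'.1 ((hw u').1 hu'ann)
  obtain ⟨s, hs⟩ := Ideal.mem_span_singleton'.1 ((hw v').1 hv'ann)
  -- w ∈ 𝔪 = a ⊔ b, write w = x + y
  have hwm : w ∈ a ⊔ b := by rw [← hm]; exact hann w hw0
  obtain ⟨x, hx, y, hy, hxy⟩ := Submodule.mem_sup.1 hwm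
  -- u' = r x
  have hu'rx : u' = r * x := by
    have h1 : u' - r * x = r * y := by
      rw [← hr, ← hxy]; ring
    have h2 : u' - r * x = 0 :=
      hinf0 _ (Ideal.sub_mem a hu' (Ideal.mul_mem_left a r hx))
        (h1 ▸ Ideal.mul_mem_left b r hy)
    linear_combination h2
  have hv'sy : v' = s * y := by
    have h1 : v' - s * y = s * x := by
      rw [← hs, ← hxy]; ring
    have h2 : v' - s * y = 0 :=
      hinf0 _ (h1 ▸ Ideal.mul_mem_left a s hx)
        (Ideal.sub_mem b hv' (Ideal.mul_mem_left b s hy))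
    linear_combination h2
  -- x u = 0 and y v = 0
  have hxu : x * u = 0 := by
    have hsum : x * u + y * v = 0 := by
      have := hw0
      rw [← hxy] at this
      have h1 : x * v = 0 := hmul0 x hx v hv
      have h2 : y * u = 0 := by rw [mul_comm]; exact hmul0 u hu y hy
      linear_combination this - h1 - h2
    refine hinf0 _ (Ideal.mul_mem_right u a hx) ?_
    have : x * u = -(y * v) := by linear_combination hsum
    rw [this]
    exact neg_mem (Ideal.mul_mem_right v b hy)
  -- hence x ∈ ann(u+v) = (w), so x = c w
  have hxann : x * (u + v) = 0 := by
    rw [mul_add, hxu, hmul0 x hx v hv, add_zero]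
  obtain ⟨c, hc⟩ := Ideal.mem_span_singleton'.1 ((hw x).1 hxann)
  -- (1-c) x = 0 and c y = 0
  have hkey : (1 - c) * x = c * y := by rw [← hxy] at hc; linear_combination -hc
  have hcx : (1 - c) * x = 0 :=
    hinf0 _ (Ideal.mul_mem_left a _ hx) (hkey ▸ Ideal.mul_mem_left b c hy)
  have hcy : c * y = 0 := by rw [← hkey]; exact hcx
  by_cases hc1 : IsUnit c
  · -- c unit ⇒ y = 0 ⇒ v' = 0
    obtain ⟨d, hd⟩ := hc1.exists_left_inv
    have hy0 : y = 0 := by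
      have := congrArg (d * ·) hcy
      simpa [← mul_assoc, hd] using this
    exact hv'0 (by rw [hv'sy, hy0, mul_zero])
  · -- c non-unit ⇒ 1 - c unit ⇒ x = 0 ⇒ u' = 0
    have hc1u : IsUnit (1 - c) :=
      IsLocalRing.isUnit_one_sub_self_of_mem_nonunits c (mem_nonunits_iff.2 hc1)
    obtain ⟨d, hd⟩ := hc1u.exists_left_inv
    have hx0 : x = 0 := by
      have := congrArg (d * ·) hcx
      simpa [← mul_assoc, hd] using this
    exact hu'0 (by rw [hu'rx, hx0, mul_zero])
end
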